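/- For finite random variables M, X^n, Y^n, Z^n: H(M) ≥ Σ_{i=1}^n [ I(M,Y^{i-1},Z^{i-1};X_i,Y_i,Z_i) − 2 I(X^{i-1},Y^{i-1},Z^{i-1};X_i,Y_i,Z_i) ]. -/

import Mathlib

open scoped BigOperators

/-- Probability that random variable `X` takes value `s`, under pmf `μ` on a finite sample space. -/
noncomputable def probOf {Ω S : Type*} [Fintype Ω] [DecidableEq S]
    (μ : Ω → ℝ) (X : Ω → S) (s : S) : ℝ :=
  ∑ ω, if X ω = s then μ ω else 0

/-- `μ` is a probability mass function. -/
def IsPMF {Ω : Type*} [Fintype Ω] (μ : Ω → ℝ) : Prop :=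
  (∀ ω, 0 ≤ μ ω) ∧ ∑ ω, μ ω = 1

/-- Shannon entropy (in bits) of a finite random variable. -/
noncomputable def entropy {Ω S : Type*} [Fintype Ω] [Fintype S] [DecidableEq S]
    (μ : Ω → ℝ) (X : Ω → S) : ℝ :=
  ∑ s, -(probOf μ X s * Real.logb 2 (probOf μ X s))

/-- Conditional entropy `H(X|Y)`. -/
noncomputable def condEntropy {Ω S T : Type*} [Fintype Ω] [Fintype S] [Fintype T]
    [DecidableEq S] [DecidableEq T] (μ : Ω → ℝ) (X : Ω → S) (Y : Ω → T) : ℝ :=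
  entropy μ (fun ω => (X ω, Y ω)) - entropy μ Y

/-- Mutual information `I(X;Y)`. -/
noncomputable def mutualInfo {Ω S T : Type*} [Fintype Ω] [Fintype S] [Fintype T]
    [DecidableEq S] [DecidableEq T] (μ : Ω → ℝ) (X : Ω → S) (Y : Ω → T) : ℝ :=
  entropy μ X + entropy μ Y - entropy μ (fun ω => (X ω, Y ω))

/-- Conditional mutual information `I(X;Y|Z)`. -/
noncomputable def condMutualInfo {Ω S T U : Type*} [Fintype Ω] [Fintype S] [Fintype T] [Fintype U]
    [DecidableEq S] [DecidableEq T] [DecidableEq U]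
    (μ : Ω → ℝ) (X : Ω → S) (Y : Ω → T) (Z : Ω → U) : ℝ :=
  entropy μ (fun ω => (X ω, Z ω)) + entropy μ (fun ω => (Y ω, Z ω))
    - entropy μ (fun ω => (X ω, Y ω, Z ω)) - entropy μ Z

/-- Independence of two finite random variables. -/
def IndepRV {Ω S T : Type*} [Fintype Ω] [DecidableEq S] [DecidableEq T]
    (μ : Ω → ℝ) (X : Ω → S) (Y : Ω → T) : Prop :=
  ∀ s t, probOf μ (fun ω => (X ω, Y ω)) (s, t) = probOf μ X s * probOf μ Y t

/-- Conditional independence of `X` and `Y` given `Z`. -/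
def CondIndepRV {Ω S T U : Type*} [Fintype Ω] [DecidableEq S] [DecidableEq T] [DecidableEq U]
    (μ : Ω → ℝ) (X : Ω → S) (Y : Ω → T) (Z : Ω → U) : Prop :=
  ∀ s t u, probOf μ (fun ω => (X ω, Y ω, Z ω)) (s, t, u) * probOf μ Z u =
    probOf μ (fun ω => (X ω, Z ω)) (s, u) * probOf μ (fun ω => (Y ω, Z ω)) (t, u)

section Aux
open Finset

variable {Ω S T U : Type*} [Fintype Ω]

lemma probOf_nonneg [DecidableEq S] {μ : Ω → ℝ} (hμ : ∀ ω, 0 ≤ μ ω) (X : Ω → S) (s : S) :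
    0 ≤ probOf μ X s :=
  Finset.sum_nonneg fun ω _ => by split <;> simp [hμ ω]

lemma sum_probOf [Fintype S] [DecidableEq S] {μ : Ω → ℝ} (hμ : IsPMF μ) (X : Ω → S) :
    ∑ s, probOf μ X s = 1 := by
  unfold probOf
  rw [Finset.sum_comm, ← hμ.2]
  exact Finset.sum_congr rfl fun ω _ => by simp

lemma probOf_comp [Fintype S] [DecidableEq S] [DecidableEq T] (μ : Ω → ℝ)
    (f : S → T) (X : Ω → S) (t : T) :
    probOf μ (fun ω => f (X ω)) t = ∑ s, if f s = t then probOf μ X s else 0 := by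
  unfold probOf
  have : ∀ s, (if f s = t then ∑ ω : Ω, if X ω = s then μ ω else 0 else 0)
      = ∑ ω : Ω, if X ω = s ∧ f s = t then μ ω else 0 := by
    intro s
    by_cases h : f s = t <;> simp [h]
  simp only [this]
  rw [Finset.sum_comm]
  refine Finset.sum_congr rfl fun ω _ => ?_
  rw [Finset.sum_eq_single (X ω)]
  · simp
  · intro b _ hb; simp [Ne.symm hb]
  · simp

lemma entropy_comp_inj [Fintype S] [DecidableEq S] [Fintype T] [DecidableEq T]
    (μ : Ω → ℝ) {f : S → T} (hf : Function.Injective f) (X : Ω → S) :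
    entropy μ (fun ω => f (X ω)) = entropy μ X := by
  unfold entropy
  have h0 : ∀ t, (¬ ∃ s, f s = t) → probOf μ (fun ω => f (X ω)) t = 0 := by
    intro t ht
    refine Finset.sum_eq_zero fun ω _ => ?_
    rw [if_neg]; exact fun h => ht ⟨X ω, h⟩
  have h1 : ∀ s, probOf μ (fun ω => f (X ω)) (f s) = probOf μ X s := fun s =>
    Finset.sum_congr rfl fun ω _ => by simp only [hf.eq_iff]
  calc ∑ t, -(probOf μ (fun ω => f (X ω)) t * Real.logb 2 (probOf μ (fun ω => f (X ω)) t))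
      = ∑ t ∈ (Finset.univ : Finset S).image f,
          -(probOf μ (fun ω => f (X ω)) t * Real.logb 2 (probOf μ (fun ω => f (X ω)) t)) := by
        refine (Finset.sum_subset (Finset.subset_univ _) fun t _ ht => ?_).symm
        rw [h0 t (by simpa using ht)]; simp
    _ = ∑ s, -(probOf μ X s * Real.logb 2 (probOf μ X s)) := by
        rw [Finset.sum_image (fun a _ b _ h => hf h)]
        exact Finset.sum_congr rfl fun s _ => by rw [h1]

end Aux
set_option linter.unusedSectionVars false
section Aux2
open Finset

variable {Ω S T U : Type*} [Fintype Ω] [Fintype S] [DecidableEq S]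
  [Fintype T] [DecidableEq T] [Fintype U] [DecidableEq U]

lemma probOf_fst (μ : Ω → ℝ) (X : Ω → S) (Y : Ω → T) (s : S) :
    probOf μ X s = ∑ t, probOf μ (fun ω => (X ω, Y ω)) (s, t) := by
  unfold probOf
  rw [Finset.sum_comm]
  refine Finset.sum_congr rfl fun ω _ => ?_
  by_cases h : X ω = s <;> simp [Prod.ext_iff, h]

lemma probOf_snd (μ : Ω → ℝ) (X : Ω → S) (Y : Ω → T) (t : T) :
    probOf μ Y t = ∑ s, probOf μ (fun ω => (X ω, Y ω)) (s, t) := by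
  unfold probOf
  rw [Finset.sum_comm]
  refine Finset.sum_congr rfl fun ω _ => ?_
  by_cases h : Y ω = t <;> simp [Prod.ext_iff, h]

lemma probOf_mid (μ : Ω → ℝ) (X : Ω → S) (Y : Ω → T) (Z : Ω → U) (s : S) (u : U) :
    probOf μ (fun ω => (X ω, Z ω)) (s, u)
      = ∑ t, probOf μ (fun ω => (X ω, Y ω, Z ω)) (s, t, u) := by
  unfold probOf
  rw [Finset.sum_comm]
  refine Finset.sum_congr rfl fun ω _ => ?_
  by_cases h1 : X ω = s <;> by_cases h2 : Z ω = u <;> simp [Prod.ext_iff, h1, h2]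

lemma probOf_le_fst {μ : Ω → ℝ} (hμ : ∀ ω, 0 ≤ μ ω) (X : Ω → S) (Y : Ω → T) (s : S) (t : T) :
    probOf μ (fun ω => (X ω, Y ω)) (s, t) ≤ probOf μ X s := by
  rw [probOf_fst μ X Y s]
  exact Finset.single_le_sum (f := fun t => probOf μ (fun ω => (X ω, Y ω)) (s, t))
    (fun t _ => probOf_nonneg hμ _ _) (Finset.mem_univ t)

lemma probOf_le_snd {μ : Ω → ℝ} (hμ : ∀ ω, 0 ≤ μ ω) (X : Ω → S) (Y : Ω → T) (s : S) (t : T) :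
    probOf μ (fun ω => (X ω, Y ω)) (s, t) ≤ probOf μ Y t := by
  rw [probOf_snd μ X Y t]
  exact Finset.single_le_sum (f := fun s => probOf μ (fun ω => (X ω, Y ω)) (s, t))
    (fun s _ => probOf_nonneg hμ _ _) (Finset.mem_univ s)

lemma gibbs {ι : Type*} [Fintype ι] (p q : ι → ℝ) (hp : ∀ i, 0 ≤ p i)
    (hp1 : ∑ i, p i = 1) (hq : ∀ i, 0 ≤ q i) (hq1 : ∑ i, q i ≤ 1)
    (hsupp : ∀ i, 0 < p i → 0 < q i) :
    ∑ i, p i * Real.log (q i / p i) ≤ 0 := by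
  have h1 : ∀ i, p i * Real.log (q i / p i) ≤ q i - p i := by
    intro i
    rcases eq_or_lt_of_le (hp i) with h | h
    · simp [← h, hq i]
    · have hqi := hsupp i h
      have hlog := Real.log_le_sub_one_of_pos (div_pos hqi h)
      calc p i * Real.log (q i / p i) ≤ p i * (q i / p i - 1) :=
            mul_le_mul_of_nonneg_left hlog h.le
        _ = q i - p i := by field_simp
  calc ∑ i, p i * Real.log (q i / p i) ≤ ∑ i, (q i - p i) :=
        Finset.sum_le_sum fun i _ => h1 i
    _ = ∑ i, q i - ∑ i, p i := Finset.sum_sub_distrib _ _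
    _ ≤ 0 := by rw [hp1]; linarith

lemma kl_nonneg {ι : Type*} [Fintype ι] (p q : ι → ℝ) (hp : ∀ i, 0 ≤ p i)
    (hp1 : ∑ i, p i = 1) (hq : ∀ i, 0 ≤ q i) (hq1 : ∑ i, q i ≤ 1)
    (hsupp : ∀ i, 0 < p i → 0 < q i) :
    0 ≤ ∑ i, p i * (Real.logb 2 (p i) - Real.logb 2 (q i)) := by
  have key : ∀ i, p i * (Real.logb 2 (p i) - Real.logb 2 (q i))
      = (Real.log 2)⁻¹ * -(p i * Real.log (q i / p i)) := by
    intro i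
    rcases eq_or_lt_of_le (hp i) with h | h
    · simp [← h]
    · have hqi := hsupp i h
      rw [Real.log_div hqi.ne' h.ne']
      simp only [Real.logb]
      field_simp
      ring
  simp only [key]
  rw [← Finset.mul_sum, Finset.sum_neg_distrib]
  have := gibbs p q hp hp1 hq hq1 hsupp
  have hl2 : (0:ℝ) < (Real.log 2)⁻¹ := by positivity
  nlinarith

end Aux2
set_option linter.unusedSectionVars false
section Aux3
open Finset

variable {Ω S T U : Type*} [Fintype Ω] [Fintype S] [DecidableEq S]
  [Fintype T] [DecidableEq T] [Fintype U] [DecidableEq U]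

lemma sum_neg_mul (ι : Type*) [Fintype ι] (a : ι → ℝ) (L : ℝ) :
    ∑ j, -(a j * L) = -((∑ j, a j) * L) := by
  rw [Finset.sum_neg_distrib, Finset.sum_mul]

lemma entropy_fst_expand (μ : Ω → ℝ) (X : Ω → S) (Y : Ω → T) :
    entropy μ X = ∑ s, ∑ t, -(probOf μ (fun ω => (X ω, Y ω)) (s, t) * Real.logb 2 (probOf μ X s)) := by
  unfold entropy
  refine Finset.sum_congr rfl fun s _ => ?_
  rw [sum_neg_mul, ← probOf_fst]

lemma entropy_snd_expand (μ : Ω → ℝ) (X : Ω → S) (Y : Ω → T) :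
    entropy μ Y = ∑ t, ∑ s, -(probOf μ (fun ω => (X ω, Y ω)) (s, t) * Real.logb 2 (probOf μ Y t)) := by
  unfold entropy
  refine Finset.sum_congr rfl fun t _ => ?_
  rw [sum_neg_mul, ← probOf_snd]

lemma entropy_snd_le {μ : Ω → ℝ} (hμ : IsPMF μ) (X : Ω → S) (Y : Ω → T) :
    entropy μ Y ≤ entropy μ (fun ω => (X ω, Y ω)) := by
  rw [entropy_snd_expand μ X Y, Finset.sum_comm]
  unfold entropy
  rw [Fintype.sum_prod_type]
  refine Finset.sum_le_sum fun s _ => Finset.sum_le_sum fun t _ => ?_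
  set p := probOf μ (fun ω => (X ω, Y ω)) (s, t) with hp
  rcases eq_or_lt_of_le (probOf_nonneg hμ.1 (fun ω => (X ω, Y ω)) (s, t)) with h | h
  · have h0 : p = 0 := by rw [hp, ← h]
    simp [h0]
  · have hppos : 0 < p := by rw [hp]; exact h
    have hle : p ≤ probOf μ Y t := probOf_le_snd hμ.1 X Y s t
    have : Real.logb 2 p ≤ Real.logb 2 (probOf μ Y t) :=
      Real.logb_le_logb_of_le (by norm_num) hppos hle
    nlinarith

lemma mutualInfo_nonneg {μ : Ω → ℝ} (hμ : IsPMF μ) (X : Ω → S) (Y : Ω → T) :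
    0 ≤ mutualInfo μ X Y := by
  set p := fun i : S × T => probOf μ (fun ω => (X ω, Y ω)) i with hpdef
  set q := fun i : S × T => probOf μ X i.1 * probOf μ Y i.2 with hqdef
  have hI : mutualInfo μ X Y = ∑ i : S × T, p i * (Real.logb 2 (p i) - Real.logb 2 (q i)) := by
    unfold mutualInfo
    rw [entropy_fst_expand μ X Y, entropy_snd_expand μ X Y, Finset.sum_comm (γ := T)]
    unfold entropy
    rw [Fintype.sum_prod_type, ← Finset.sum_add_distrib, ← Finset.sum_sub_distrib]
    rw [Fintype.sum_prod_type]
    refine Finset.sum_congr rfl fun s _ => ?_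
    rw [← Finset.sum_add_distrib, ← Finset.sum_sub_distrib]
    refine Finset.sum_congr rfl fun t _ => ?_
    rcases eq_or_lt_of_le (probOf_nonneg hμ.1 (fun ω => (X ω, Y ω)) (s, t)) with h | h
    · simp [hpdef, ← h]
    · have hX : 0 < probOf μ X s := lt_of_lt_of_le h (probOf_le_fst hμ.1 X Y s t)
      have hY : 0 < probOf μ Y t := lt_of_lt_of_le h (probOf_le_snd hμ.1 X Y s t)
      simp only [hpdef, hqdef]
      rw [Real.logb_mul hX.ne' hY.ne']
      ring
  rw [hI]
  refine kl_nonneg p q (fun i => probOf_nonneg hμ.1 _ _) (sum_probOf hμ _)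
    (fun i => mul_nonneg (probOf_nonneg hμ.1 _ _) (probOf_nonneg hμ.1 _ _)) ?_ ?_
  · have : ∑ i : S × T, q i = (∑ s, probOf μ X s) * (∑ t, probOf μ Y t) := by
      rw [Fintype.sum_prod_type, Finset.sum_mul]
      exact Finset.sum_congr rfl fun s _ => by rw [Finset.mul_sum]
    rw [this, sum_probOf hμ X, sum_probOf hμ Y]; norm_num
  · intro i hi
    exact mul_pos (lt_of_lt_of_le hi (probOf_le_fst hμ.1 X Y i.1 i.2))
      (lt_of_lt_of_le hi (probOf_le_snd hμ.1 X Y i.1 i.2))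

end Aux3
set_option linter.unusedSectionVars false
section Aux4
open Finset

variable {Ω S T U : Type*} [Fintype Ω] [Fintype S] [DecidableEq S]
  [Fintype T] [DecidableEq T] [Fintype U] [DecidableEq U]

lemma sum_triple (f : S × T × U → ℝ) : ∑ i, f i = ∑ s, ∑ t, ∑ u, f (s, t, u) := by
  rw [Fintype.sum_prod_type]
  exact Finset.sum_congr rfl fun s _ => Fintype.sum_prod_type _

lemma entropy_xz_expand (μ : Ω → ℝ) (X : Ω → S) (Y : Ω → T) (Z : Ω → U) :
    entropy μ (fun ω => (X ω, Z ω)) = ∑ s, ∑ t, ∑ u,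
      -(probOf μ (fun ω => (X ω, Y ω, Z ω)) (s, t, u)
        * Real.logb 2 (probOf μ (fun ω => (X ω, Z ω)) (s, u))) := by
  unfold entropy
  rw [Fintype.sum_prod_type]
  refine Finset.sum_congr rfl fun s _ => ?_
  conv_rhs => rw [Finset.sum_comm]
  refine Finset.sum_congr rfl fun u _ => ?_
  rw [sum_neg_mul, ← probOf_mid]

lemma entropy_yz_expand (μ : Ω → ℝ) (X : Ω → S) (Y : Ω → T) (Z : Ω → U) :
    entropy μ (fun ω => (Y ω, Z ω)) = ∑ s, ∑ t, ∑ u,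
      -(probOf μ (fun ω => (X ω, Y ω, Z ω)) (s, t, u)
        * Real.logb 2 (probOf μ (fun ω => (Y ω, Z ω)) (t, u))) := by
  unfold entropy
  rw [Fintype.sum_prod_type]
  conv_rhs => rw [Finset.sum_comm]
  refine Finset.sum_congr rfl fun t _ => ?_
  conv_rhs => rw [Finset.sum_comm]
  refine Finset.sum_congr rfl fun u _ => ?_
  rw [sum_neg_mul, ← probOf_snd μ X (fun ω => (Y ω, Z ω)) (t, u)]

lemma entropy_z_expand (μ : Ω → ℝ) (X : Ω → S) (Y : Ω → T) (Z : Ω → U) :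
    entropy μ Z = ∑ s, ∑ t, ∑ u,
      -(probOf μ (fun ω => (X ω, Y ω, Z ω)) (s, t, u)
        * Real.logb 2 (probOf μ Z u)) := by
  unfold entropy
  have comm1 : ∀ s : S, ∑ t, ∑ u, -(probOf μ (fun ω => (X ω, Y ω, Z ω)) (s, t, u)
        * Real.logb 2 (probOf μ Z u))
      = ∑ u, ∑ t, -(probOf μ (fun ω => (X ω, Y ω, Z ω)) (s, t, u)
        * Real.logb 2 (probOf μ Z u)) := fun s => Finset.sum_comm
  simp only [comm1]
  conv_rhs => rw [Finset.sum_comm]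
  refine Finset.sum_congr rfl fun u _ => ?_
  have step1 : ∀ s : S, ∑ t, -(probOf μ (fun ω => (X ω, Y ω, Z ω)) (s, t, u)
        * Real.logb 2 (probOf μ Z u))
      = -(probOf μ (fun ω => (X ω, Z ω)) (s, u) * Real.logb 2 (probOf μ Z u)) := by
    intro s; rw [sum_neg_mul, ← probOf_mid]
  simp only [step1]
  rw [sum_neg_mul, ← probOf_snd μ X Z u]

lemma entropy_xyz_expand (μ : Ω → ℝ) (X : Ω → S) (Y : Ω → T) (Z : Ω → U) :
    entropy μ (fun ω => (X ω, Y ω, Z ω)) = ∑ s, ∑ t, ∑ u,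
      -(probOf μ (fun ω => (X ω, Y ω, Z ω)) (s, t, u)
        * Real.logb 2 (probOf μ (fun ω => (X ω, Y ω, Z ω)) (s, t, u))) := by
  exact sum_triple _

lemma condMutualInfo_nonneg {μ : Ω → ℝ} (hμ : IsPMF μ) (X : Ω → S) (Y : Ω → T) (Z : Ω → U) :
    0 ≤ condMutualInfo μ X Y Z := by
  classical
  set p := fun i : S × T × U => probOf μ (fun ω => (X ω, Y ω, Z ω)) i with hpdef
  set q : S × T × U → ℝ := fun i =>
    if 0 < probOf μ Z i.2.2 then
      probOf μ (fun ω => (X ω, Z ω)) (i.1, i.2.2) * probOf μ (fun ω => (Y ω, Z ω)) i.2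
        / probOf μ Z i.2.2
    else 0 with hqdef
  -- pointwise bounds
  have hb1 : ∀ s t u, probOf μ (fun ω => (X ω, Y ω, Z ω)) (s, t, u)
      ≤ probOf μ (fun ω => (X ω, Z ω)) (s, u) := by
    intro s t u
    rw [probOf_mid μ X Y Z s u]
    exact Finset.single_le_sum (f := fun t => probOf μ (fun ω => (X ω, Y ω, Z ω)) (s, t, u))
      (fun t _ => probOf_nonneg hμ.1 _ _) (Finset.mem_univ t)
  have hb2 : ∀ s t u, probOf μ (fun ω => (X ω, Y ω, Z ω)) (s, t, u)
      ≤ probOf μ (fun ω => (Y ω, Z ω)) (t, u) :=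
    fun s t u => probOf_le_snd hμ.1 X (fun ω => (Y ω, Z ω)) s (t, u)
  have hb3 : ∀ t u, probOf μ (fun ω => (Y ω, Z ω)) (t, u) ≤ probOf μ Z u :=
    fun t u => probOf_le_snd hμ.1 Y Z t u
  have hI : condMutualInfo μ X Y Z
      = ∑ i : S × T × U, p i * (Real.logb 2 (p i) - Real.logb 2 (q i)) := by
    rw [condMutualInfo, entropy_xz_expand μ X Y Z, entropy_yz_expand μ X Y Z,
      entropy_z_expand μ X Y Z, entropy_xyz_expand μ X Y Z]
    conv_rhs => rw [sum_triple]
    rw [← Finset.sum_add_distrib, ← Finset.sum_sub_distrib, ← Finset.sum_sub_distrib]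
    refine Finset.sum_congr rfl fun s _ => ?_
    rw [← Finset.sum_add_distrib, ← Finset.sum_sub_distrib, ← Finset.sum_sub_distrib]
    refine Finset.sum_congr rfl fun t _ => ?_
    rw [← Finset.sum_add_distrib, ← Finset.sum_sub_distrib, ← Finset.sum_sub_distrib]
    refine Finset.sum_congr rfl fun u _ => ?_
    rcases eq_or_lt_of_le (probOf_nonneg hμ.1 (fun ω => (X ω, Y ω, Z ω)) (s, t, u)) with h | h
    · have h0 : p (s, t, u) = 0 := h.symm
      simp only [hpdef] at h0 ⊢
      rw [h0]; ring
    · have hXZ : 0 < probOf μ (fun ω => (X ω, Z ω)) (s, u) := lt_of_lt_of_le h (hb1 s t u)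
      have hYZ : 0 < probOf μ (fun ω => (Y ω, Z ω)) (t, u) := lt_of_lt_of_le h (hb2 s t u)
      have hZ : 0 < probOf μ Z u := lt_of_le_of_lt (le_of_eq rfl) (lt_of_lt_of_le hYZ (hb3 t u))
      have hq : q (s, t, u) = probOf μ (fun ω => (X ω, Z ω)) (s, u)
          * probOf μ (fun ω => (Y ω, Z ω)) (t, u) / probOf μ Z u := by
        simp only [hqdef]; rw [if_pos hZ]
      rw [hq, Real.logb_div (by positivity) hZ.ne', Real.logb_mul hXZ.ne' hYZ.ne']
      simp only [hpdef]
      ring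
  rw [hI]
  refine kl_nonneg p q (fun i => probOf_nonneg hμ.1 _ _) (sum_probOf hμ _) ?_ ?_ ?_
  · intro i
    simp only [hqdef]
    split
    · exact div_nonneg (mul_nonneg (probOf_nonneg hμ.1 _ _) (probOf_nonneg hμ.1 _ _))
        (probOf_nonneg hμ.1 _ _)
    · exact le_refl 0
  · -- ∑ q ≤ 1
    rw [sum_triple q]
    have inner : ∀ u : U, ∑ s, ∑ t, q (s, t, u) ≤ probOf μ Z u := by
      intro u
      by_cases hz : 0 < probOf μ Z u
      · have : ∀ s : S, ∑ t, q (s, t, u)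
            = probOf μ (fun ω => (X ω, Z ω)) (s, u) := by
          intro s
          simp only [hqdef, if_pos hz]
          rw [← Finset.sum_div, ← Finset.mul_sum, ← probOf_snd μ Y Z u,
            mul_div_assoc, div_self hz.ne', mul_one]
        simp only [this]
        rw [← probOf_snd μ X Z u]
      · simp only [hqdef, if_neg hz]
        simp [probOf_nonneg hμ.1 Z u]
    have comm1 : ∀ s : S, ∑ t, ∑ u, q (s, t, u) = ∑ u, ∑ t, q (s, t, u) :=
      fun s => Finset.sum_comm
    calc ∑ s, ∑ t, ∑ u, q (s, t, u) = ∑ s, ∑ u, ∑ t, q (s, t, u) := by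
          exact Finset.sum_congr rfl fun s _ => comm1 s
      _ = ∑ u, ∑ s, ∑ t, q (s, t, u) := Finset.sum_comm
      _ ≤ ∑ u, probOf μ Z u := Finset.sum_le_sum fun u _ => inner u
      _ = 1 := sum_probOf hμ Z
  · intro i hi
    have h1 : 0 < probOf μ (fun ω => (X ω, Z ω)) (i.1, i.2.2) :=
      lt_of_lt_of_le hi (hb1 i.1 i.2.1 i.2.2)
    have h2 : 0 < probOf μ (fun ω => (Y ω, Z ω)) i.2 :=
      lt_of_lt_of_le hi (by simpa using hb2 i.1 i.2.1 i.2.2)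
    have h3 : 0 < probOf μ Z i.2.2 := lt_of_lt_of_le h2 (by simpa using hb3 i.2.1 i.2.2)
    simp only [hqdef, if_pos h3]
    positivity

end Aux4
set_option linter.unusedSectionVars false
section Aux5
open Finset

variable {Ω S T U V' : Type*} [Fintype Ω] [Fintype S] [DecidableEq S]
  [Fintype T] [DecidableEq T] [Fintype U] [DecidableEq U] [Fintype V'] [DecidableEq V']

lemma entropy_congr {μ : Ω → ℝ} {X Y : Ω → S} (h : ∀ ω, X ω = Y ω) :
    entropy μ X = entropy μ Y := by
  have : X = Y := funext h
  rw [this]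

lemma mutualInfo_comp_inj (μ : Ω → ℝ) {f : S → T} (hf : Function.Injective f)
    (W : Ω → S) (V : Ω → U) :
    mutualInfo μ (fun ω => f (W ω)) V = mutualInfo μ W V := by
  unfold mutualInfo
  rw [entropy_comp_inj μ hf W]
  have hg : Function.Injective (fun x : S × U => (f x.1, x.2)) := by
    intro a b h
    simp only [Prod.mk.injEq] at h
    exact Prod.ext (hf h.1) h.2
  have := entropy_comp_inj μ hg (fun ω => (W ω, V ω))
  simp only at this
  rw [this]

lemma condMutualInfo_comp_inj₃ (μ : Ω → ℝ) {g : U → V'} (hg : Function.Injective g)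
    (X : Ω → S) (Y : Ω → T) (C : Ω → U) :
    condMutualInfo μ X Y (fun ω => g (C ω)) = condMutualInfo μ X Y C := by
  unfold condMutualInfo
  have h1 : Function.Injective (fun x : S × U => (x.1, g x.2)) := fun a b h => by
    simp only [Prod.mk.injEq] at h; exact Prod.ext h.1 (hg h.2)
  have h2 : Function.Injective (fun x : T × U => (x.1, g x.2)) := fun a b h => by
    simp only [Prod.mk.injEq] at h; exact Prod.ext h.1 (hg h.2)
  have h3 : Function.Injective (fun x : S × T × U => (x.1, x.2.1, g x.2.2)) := fun a b h => by
    simp only [Prod.mk.injEq] at h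
    exact Prod.ext h.1 (Prod.ext h.2.1 (hg h.2.2))
  have e1 := entropy_comp_inj μ h1 (fun ω => (X ω, C ω))
  have e2 := entropy_comp_inj μ h2 (fun ω => (Y ω, C ω))
  have e3 := entropy_comp_inj μ h3 (fun ω => (X ω, Y ω, C ω))
  have e4 := entropy_comp_inj μ hg C
  simp only at e1 e2 e3
  rw [e1, e2, e3, e4]

/-- Chain rule: `I((P,Q);V) = I(Q;V) + I(P;V|Q)`. -/
lemma mutualInfo_pair_eq (μ : Ω → ℝ) (P : Ω → S) (Q : Ω → T) (V : Ω → U) :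
    mutualInfo μ (fun ω => (P ω, Q ω)) V
      = mutualInfo μ Q V + condMutualInfo μ P V Q := by
  unfold mutualInfo condMutualInfo
  have hswap : Function.Injective (fun x : U × T => (x.2, x.1)) := fun a b h => by
    simp only [Prod.mk.injEq] at h; exact Prod.ext h.2 h.1
  have e1 := entropy_comp_inj μ hswap (fun ω => (V ω, Q ω))
  simp only at e1
  have hre : Function.Injective (fun x : S × U × T => ((x.1, x.2.2), x.2.1)) := fun a b h => by
    simp only [Prod.mk.injEq] at h
    exact Prod.ext h.1.1 (Prod.ext h.2 h.1.2)
  have e2 := entropy_comp_inj μ hre (fun ω => (P ω, V ω, Q ω))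
  simp only at e2
  rw [← e1, ← e2]
  ring

/-- Data processing: `I(f(W);V) ≤ I(W;V)`. -/
lemma mutualInfo_comp_le {μ : Ω → ℝ} (hμ : IsPMF μ) (f : S → T) (W : Ω → S) (V : Ω → U) :
    mutualInfo μ (fun ω => f (W ω)) V ≤ mutualInfo μ W V := by
  have hinj : Function.Injective (fun s : S => (s, f s)) := fun a b h => by
    simpa using congrArg Prod.fst h
  have key := mutualInfo_pair_eq μ W (fun ω => f (W ω)) V
  have hW : mutualInfo μ (fun ω => (W ω, f (W ω))) V = mutualInfo μ W V := by
    have := mutualInfo_comp_inj μ hinj W V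
    simpa using this
  have hcmi := condMutualInfo_nonneg hμ W V (fun ω => f (W ω))
  linarith [key, hW, hcmi]

lemma mutualInfo_le_entropy {μ : Ω → ℝ} (hμ : IsPMF μ) (M : Ω → S) (W : Ω → U) :
    mutualInfo μ M W ≤ entropy μ M := by
  unfold mutualInfo
  have := entropy_snd_le hμ M W
  linarith

lemma entropy_subsingleton [Subsingleton T] {μ : Ω → ℝ} (hμ : IsPMF μ) (X : Ω → T) :
    entropy μ X = 0 := by
  unfold entropy
  rcases isEmpty_or_nonempty T with hT | hT
  · simp
  · obtain ⟨t0⟩ := hT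
    rw [Fintype.sum_subsingleton _ t0]
    have : probOf μ X t0 = 1 := by
      unfold probOf
      rw [← hμ.2]
      exact Finset.sum_congr rfl fun ω _ => by rw [if_pos (Subsingleton.elim _ _)]
    rw [this]; simp

/-- Pairing with a subsingleton-valued variable does not change entropy. -/
lemma entropy_pair_subsingleton [Subsingleton T] [Nonempty T] (μ : Ω → ℝ)
    (M : Ω → S) (C : Ω → T) :
    entropy μ (fun ω => (M ω, C ω)) = entropy μ M := by
  have hinj : Function.Injective (fun s : S => (s, Classical.arbitrary T)) := fun a b h => by
    simpa using congrArg Prod.fst h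
  have := entropy_comp_inj μ hinj M
  rw [← this]
  exact entropy_congr fun ω => by rw [Subsingleton.elim (C ω) (Classical.arbitrary T)]

end Aux5
/-- H(M) ≥ Σᵢ [I(M,Y^{i-1},Z^{i-1};Xᵢ,Yᵢ,Zᵢ) − 2 I(X^{i-1},Y^{i-1},Z^{i-1};Xᵢ,Yᵢ,Zᵢ)]. -/
theorem entropy_lower_bound_chain {Ω 𝓜 𝒳 𝒴 𝒵 : Type*} [Fintype Ω]
    [Fintype 𝓜] [Fintype 𝒳] [Fintype 𝒴] [Fintype 𝒵]
    [DecidableEq 𝓜] [DecidableEq 𝒳] [DecidableEq 𝒴] [DecidableEq 𝒵]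
    (n : ℕ) (μ : Ω → ℝ) (hμ : IsPMF μ)
    (M : Ω → 𝓜) (X : Ω → Fin n → 𝒳) (Y : Ω → Fin n → 𝒴) (Z : Ω → Fin n → 𝒵) :
    entropy μ M ≥
      ∑ i : Fin n,
        (mutualInfo μ
          (fun ω => (M ω,
            (fun j : Fin i.val => Y ω (Fin.castLE i.isLt.le j)),
            (fun j : Fin i.val => Z ω (Fin.castLE i.isLt.le j))))
          (fun ω => (X ω i, Y ω i, Z ω i))
        - 2 * mutualInfo μ
          (fun ω => ((fun j : Fin i.val => X ω (Fin.castLE i.isLt.le j)),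
            (fun j : Fin i.val => Y ω (Fin.castLE i.isLt.le j)),
            (fun j : Fin i.val => Z ω (Fin.castLE i.isLt.le j))))
          (fun ω => (X ω i, Y ω i, Z ω i))) := by
  classical
  set F : ℕ → ℝ := fun k =>
    if h : k ≤ n then
      entropy μ (fun ω => (M ω, fun j : Fin k =>
        (X ω (Fin.castLE h j), Y ω (Fin.castLE h j), Z ω (Fin.castLE h j))))
    else 0 with hF
  set G : ℕ → ℝ := fun k =>
    if h : k ≤ n then
      entropy μ (fun ω => (fun j : Fin k =>
        (X ω (Fin.castLE h j), Y ω (Fin.castLE h j), Z ω (Fin.castLE h j))))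
    else 0 with hG
  rw [ge_iff_le]
  have sum_le : (∑ i : Fin n,
        (mutualInfo μ
          (fun ω => (M ω,
            (fun j : Fin i.val => Y ω (Fin.castLE i.isLt.le j)),
            (fun j : Fin i.val => Z ω (Fin.castLE i.isLt.le j))))
          (fun ω => (X ω i, Y ω i, Z ω i))
        - 2 * mutualInfo μ
          (fun ω => ((fun j : Fin i.val => X ω (Fin.castLE i.isLt.le j)),
            (fun j : Fin i.val => Y ω (Fin.castLE i.isLt.le j)),
            (fun j : Fin i.val => Z ω (Fin.castLE i.isLt.le j))))
          (fun ω => (X ω i, Y ω i, Z ω i))))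
      ≤ ∑ i : Fin n, ((F i.val - F (i.val + 1)) + (G (i.val + 1) - G i.val)) := by
    refine Finset.sum_le_sum fun i _ => ?_
    have hn1 : i.val + 1 ≤ n := i.isLt
    -- abbreviations
    set Vi : Ω → 𝒳 × 𝒴 × 𝒵 := fun ω => (X ω i, Y ω i, Z ω i) with hVi
    set A : Ω → (Fin i.val → 𝒳) × (Fin i.val → 𝒴) × (Fin i.val → 𝒵) := fun ω =>
      ((fun j : Fin i.val => X ω (Fin.castLE i.isLt.le j)),
       (fun j : Fin i.val => Y ω (Fin.castLE i.isLt.le j)),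
       (fun j : Fin i.val => Z ω (Fin.castLE i.isLt.le j))) with hA
    set Wpre : Ω → Fin i.val → 𝒳 × 𝒴 × 𝒵 := fun ω => fun j : Fin i.val =>
      (X ω (Fin.castLE i.isLt.le j), Y ω (Fin.castLE i.isLt.le j),
        Z ω (Fin.castLE i.isLt.le j)) with hWpre
    have c1 : mutualInfo μ
          (fun ω => (M ω,
            (fun j : Fin i.val => Y ω (Fin.castLE i.isLt.le j)),
            (fun j : Fin i.val => Z ω (Fin.castLE i.isLt.le j)))) Vi
        ≤ mutualInfo μ (fun ω => (M ω, A ω)) Vi := by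
      exact mutualInfo_comp_le hμ
        (fun x : 𝓜 × ((Fin i.val → 𝒳) × (Fin i.val → 𝒴) × (Fin i.val → 𝒵)) =>
          (x.1, x.2.2.1, x.2.2.2))
        (fun ω => (M ω, A ω)) Vi
    have c2 : mutualInfo μ (fun ω => (M ω, A ω)) Vi
        = mutualInfo μ A Vi + condMutualInfo μ M Vi A :=
      mutualInfo_pair_eq μ M A Vi
    have c3 : 0 ≤ mutualInfo μ A Vi := mutualInfo_nonneg hμ A Vi
    have c4 : condMutualInfo μ M Vi A = condMutualInfo μ M Vi Wpre := by
      have hg : Function.Injective (fun v : Fin i.val → 𝒳 × 𝒴 × 𝒵 =>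
          ((fun j => (v j).1), (fun j => (v j).2.1), (fun j => (v j).2.2))) := by
        intro a b h
        simp only [Prod.mk.injEq] at h
        funext j
        have h1 := congrFun h.1 j
        have h2 := congrFun h.2.1 j
        have h3 := congrFun h.2.2 j
        exact Prod.ext h1 (Prod.ext h2 h3)
      exact condMutualInfo_comp_inj₃ μ hg M Vi Wpre
    -- snoc identification
    have hsnocM : ∀ ω : Ω, (Fin.snoc (Wpre ω) (Vi ω) : Fin (i.val + 1) → 𝒳 × 𝒴 × 𝒵)
        = fun j : Fin (i.val + 1) =>
          (X ω (Fin.castLE hn1 j), Y ω (Fin.castLE hn1 j), Z ω (Fin.castLE hn1 j)) := by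
      intro ω
      funext j
      refine Fin.lastCases ?_ ?_ j
      · rw [Fin.snoc_last]
        have : Fin.castLE hn1 (Fin.last i.val) = i := by
          apply Fin.ext; simp
        rw [this]
      · intro j'
        rw [Fin.snoc_castSucc]
        have : Fin.castLE hn1 (Fin.castSucc j') = Fin.castLE i.isLt.le j' := by
          apply Fin.ext; simp
        rw [hWpre]
        simp only [this]
    have hsnocinj : Function.Injective
        (fun x : (𝒳 × 𝒴 × 𝒵) × (Fin i.val → 𝒳 × 𝒴 × 𝒵) =>
          (Fin.snoc x.2 x.1 : Fin (i.val + 1) → 𝒳 × 𝒴 × 𝒵)) := by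
      intro a b h
      have hw : a.1 = b.1 := by
        have := congrFun h (Fin.last i.val); simpa using this
      have hv : a.2 = b.2 := funext fun j => by
        have := congrFun h (Fin.castSucc j); simpa using this
      exact Prod.ext hw hv
    have e_a : entropy μ (fun ω => (M ω, Wpre ω)) = F i.val := by
      simp only [hF]; rw [dif_pos (Nat.le_of_lt i.isLt)]
    have e_b : entropy μ Wpre = G i.val := by
      simp only [hG]; rw [dif_pos (Nat.le_of_lt i.isLt)]
    have e_c : entropy μ (fun ω => (M ω, Vi ω, Wpre ω)) = F (i.val + 1) := by
      have hg2 : Function.Injective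
          (fun x : 𝓜 × ((𝒳 × 𝒴 × 𝒵) × (Fin i.val → 𝒳 × 𝒴 × 𝒵)) =>
            (x.1, (Fin.snoc x.2.2 x.2.1 : Fin (i.val + 1) → 𝒳 × 𝒴 × 𝒵))) := by
        intro a b h
        simp only [Prod.mk.injEq] at h
        exact Prod.ext h.1 (hsnocinj (by simpa using h.2))
      have step := entropy_comp_inj μ hg2 (fun ω => (M ω, Vi ω, Wpre ω))
      simp only at step
      rw [← step]; simp only [hF]; rw [dif_pos hn1]
      exact entropy_congr fun ω => by rw [hsnocM ω]
    have e_d : entropy μ (fun ω => (Vi ω, Wpre ω)) = G (i.val + 1) := by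
      have step := entropy_comp_inj μ hsnocinj (fun ω => (Vi ω, Wpre ω))
      simp only at step
      rw [← step]; simp only [hG]; rw [dif_pos hn1]
      exact entropy_congr fun ω => by rw [hsnocM ω]
    have c5 : condMutualInfo μ M Vi Wpre
        = (F i.val - F (i.val + 1)) + (G (i.val + 1) - G i.val) := by
      rw [condMutualInfo, e_a, e_b, e_c, e_d]
      ring
    linarith [c1, c2, c3, c4, c5]
  have tele : (∑ i : Fin n, ((F i.val - F (i.val + 1)) + (G (i.val + 1) - G i.val)))
      = (F 0 - F n) + (G n - G 0) := by
    rw [Fin.sum_univ_eq_sum_range (fun k => (F k - F (k + 1)) + (G (k + 1) - G k)) n]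
    rw [Finset.sum_add_distrib, Finset.sum_range_sub' F n, Finset.sum_range_sub G n]
  have final : (F 0 - F n) + (G n - G 0) ≤ entropy μ M := by
    haveI hsub : Subsingleton (Fin 0 → 𝒳 × 𝒴 × 𝒵) :=
      ⟨fun a b => funext fun j => j.elim0⟩
    haveI hne : Nonempty (Fin 0 → 𝒳 × 𝒴 × 𝒵) := ⟨fun j => j.elim0⟩
    have hF0 : F 0 = entropy μ M := by
      simp only [hF]; rw [dif_pos (Nat.zero_le n)]
      exact entropy_pair_subsingleton μ M _
    have hG0 : G 0 = 0 := by
      simp only [hG]; rw [dif_pos (Nat.zero_le n)]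
      exact entropy_subsingleton hμ _
    have hle : G n ≤ F n := by
      simp only [hF, hG]; rw [dif_pos (le_refl n), dif_pos (le_refl n)]
      exact entropy_snd_le hμ M _
    linarith
  exact le_trans sum_le (le_trans (le_of_eq tele) final)
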